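/- Let n and k be positive integers and let M be the monoid of n×n matrices over a group with zero G⁰ whose nonzero entries form a partial permutation pattern (generalized rook matrices). Then M satisfies d(x^k) = r(x^k) for all x (where d(x)=x⁻¹x, r(x)=xx⁻¹) if and only if k ≥ n. -/

import Mathlib

/-- A generalized rook matrix of order `n` over the group with zero `G⁰`:
an `n × n` matrix over `G ∪ {0}` with at most one nonzero entry in each row
and each column.  We record, for each column `j`, the (optional) pair
`(entry, row)` of its unique nonzero entry; the field `inj` states that
distinct columns use distinct rows. -/
structure Rook (n : ℕ) (G : Type*) [Group G] : Type _ where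
  col : Fin n → Option (G × Fin n)
  inj : ∀ ⦃j k : Fin n⦄ ⦃p q : G × Fin n⦄,
      col j = some p → col k = some q → p.2 = q.2 → j = k

namespace Rook

variable {n : ℕ} {G : Type*} [Group G]

theorem ext' {x y : Rook n G} (h : x.col = y.col) : x = y := by
  cases x; cases y; cases h; rfl

/-- Matrix multiplication of generalized rook matrices. -/
instance : Mul (Rook n G) where
  mul x y :=
  { col := fun j => (y.col j).bind fun p => (x.col p.2).map fun q => (q.1 * p.1, q.2)
    inj := by
      intro j k p q hp hq hpq
      simp only [Option.bind_eq_some_iff, Option.map_eq_some_iff] at hp hq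
      obtain ⟨pj, hyj, qj, hxj, rfl⟩ := hp
      obtain ⟨pk, hyk, qk, hxk, rfl⟩ := hq
      exact y.inj hyj hyk (x.inj hxj hxk hpq) }

theorem mul_col (x y : Rook n G) (j : Fin n) :
    (x * y).col j = (y.col j).bind fun p => (x.col p.2).map fun q => (q.1 * p.1, q.2) :=
  rfl

/-- The identity matrix. -/
instance : One (Rook n G) where
  one :=
  { col := fun j => some (1, j)
    inj := by
      intro j k p q hp hq hpq
      simp only [Option.some.injEq] at hp hq
      subst hp; subst hq; exact hpq }

theorem one_col (j : Fin n) : (1 : Rook n G).col j = some (1, j) := rfl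

/-- The zero matrix. -/
instance : Zero (Rook n G) where
  zero :=
  { col := fun _ => none
    inj := fun _ _ _ _ hp _ _ => nomatch hp }

instance : Monoid (Rook n G) where
  mul_assoc x y z := by
    refine ext' (funext fun j => ?_)
    simp only [mul_col]
    rcases hz : z.col j with _ | p
    · simp
    rcases hy : y.col p.2 with _ | p'
    · simp [hy]
    rcases hx : x.col p'.2 with _ | p''
    · simp [hy, hx]
    simp [hy, hx, mul_assoc]
  one_mul x := by
    refine ext' (funext fun j => ?_)
    simp only [mul_col]
    rcases hx : x.col j with _ | p <;> simp [one_col]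
  mul_one x := by
    refine ext' (funext fun j => ?_)
    simp only [mul_col, one_col]
    rcases hx : x.col j with _ | p <;> simp [hx]

open scoped Classical in
/-- The inverse of a generalized rook matrix (conjugate transpose pattern). -/
noncomputable instance : Inv (Rook n G) where
  inv x :=
  { col := fun i =>
      if h : ∃ jp : Fin n × (G × Fin n), x.col jp.1 = some jp.2 ∧ jp.2.2 = i
      then some ((h.choose.2.1)⁻¹, h.choose.1)
      else none
    inj := by
      intro i i' p q hp hq hpq
      try simp only [] at hp hq
      split_ifs at hp hq with h h'
      obtain ⟨hcol, hrow⟩ := h.choose_spec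
      obtain ⟨hcol', hrow'⟩ := h'.choose_spec
      injection hp with hp'
      injection hq with hq'
      subst hp'; subst hq'
      have hj : h.choose.1 = h'.choose.1 := hpq
      rw [← hj, hcol] at hcol'
      have hpq2 : h.choose.2 = h'.choose.2 := Option.some.inj hcol'
      rw [← hrow, ← hrow', hpq2] }

end Rook

open scoped Classical

namespace Rook

variable {n : ℕ} {G : Type*} [Group G]

theorem inv_col_some (x : Rook n G) {j i : Fin n} {g : G} (h : x.col j = some (g, i)) :
    x⁻¹.col i = some (g⁻¹, j) := by
  have hex : ∃ jp : Fin n × (G × Fin n), x.col jp.1 = some jp.2 ∧ jp.2.2 = i :=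
    ⟨(j, (g, i)), h, rfl⟩
  have hdef : x⁻¹.col i = some ((hex.choose.2.1)⁻¹, hex.choose.1) := dif_pos hex
  obtain ⟨h1, h2⟩ := hex.choose_spec
  have hj : hex.choose.1 = j := x.inj h1 h h2
  rw [hj, h] at h1
  have h3 : hex.choose.2 = (g, i) := (Option.some.inj h1).symm
  rw [hdef, hj, h3]

theorem inv_col_none (x : Rook n G) {i : Fin n}
    (h : ¬ ∃ jp : Fin n × (G × Fin n), x.col jp.1 = some jp.2 ∧ jp.2.2 = i) :
    x⁻¹.col i = none := dif_neg h

theorem d_col (x : Rook n G) (j : Fin n) :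
    (x⁻¹ * x).col j = (x.col j).map (fun _ => ((1 : G), j)) := by
  rw [mul_col]
  rcases h : x.col j with _ | ⟨g, i⟩
  · rfl
  · simp [inv_col_some x h]

theorem r_col (x : Rook n G) (i : Fin n) :
    (x * x⁻¹).col i =
      if ∃ jp : Fin n × (G × Fin n), x.col jp.1 = some jp.2 ∧ jp.2.2 = i
      then some ((1 : G), i) else none := by
  rw [mul_col]
  by_cases hex : ∃ jp : Fin n × (G × Fin n), x.col jp.1 = some jp.2 ∧ jp.2.2 = i
  · rw [if_pos hex]
    obtain ⟨⟨j, g, i'⟩, h1, h2⟩ := hex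
    simp only at h2
    subst h2
    rw [inv_col_some x h1]
    simp [h1]
  · rw [if_neg hex, inv_col_none x hex]
    rfl

end Rook

namespace Rook

variable {n : ℕ} {G : Type*} [Group G]

/-- The underlying partial map of `x ^ m`, column to row. -/
def F (x : Rook n G) (m : ℕ) (j : Fin n) : Option (Fin n) :=
  ((x ^ m).col j).map Prod.snd

theorem F_zero (x : Rook n G) (j : Fin n) : F x 0 j = some j := by
  simp [F, pow_zero, one_col]

theorem F_succ (x : Rook n G) (m : ℕ) (j : Fin n) :
    F x (m + 1) j = (F x m j).bind (F x 1) := by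
  rw [F, pow_succ', mul_col]
  rcases h : (x ^ m).col j with _ | p
  · simp [F, h]
  · simp only [F, h, pow_one, Option.bind_some, Option.map_map]
    congr 1
    rw [pow_one]

theorem F_succ' (x : Rook n G) (m : ℕ) (j : Fin n) :
    F x (m + 1) j = (F x 1 j).bind (F x m) := by
  rw [F, pow_succ, mul_col]
  rcases h : x.col j with _ | p
  · simp [F, pow_one, h]
  · simp only [F, pow_one, h, Option.bind_some, Option.map_map]
    congr 1

theorem F_add (x : Rook n G) (a b : ℕ) (j : Fin n) :
    F x (a + b) j = (F x b j).bind (F x a) := by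
  induction b with
  | zero => simp [F_zero]
  | succ b ih =>
      rw [show a + (b + 1) = (a + b) + 1 from rfl, F_succ x (a + b), ih, F_succ x b]
      cases hb : F x b j with
      | none => simp
      | some u =>
          simp only [Option.bind_some]
          rw [← F_succ, ← F_succ']

theorem F_inj (x : Rook n G) {m : ℕ} {u v w : Fin n}
    (hu : F x m u = some w) (hv : F x m v = some w) : u = v := by
  simp only [F, Option.map_eq_some_iff] at hu hv
  obtain ⟨p, hp, hp2⟩ := hu
  obtain ⟨q, hq, hq2⟩ := hv
  exact (x ^ m).inj hp hq (hp2.trans hq2.symm)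

theorem F_mono (x : Rook n G) {a b : ℕ} {j : Fin n} (hab : a ≤ b)
    (h : (F x b j).isSome) : (F x a j).isSome := by
  obtain ⟨c, rfl⟩ := Nat.le.dest hab
  rw [show a + c = c + a from Nat.add_comm a c, F_add] at h
  cases ha : F x a j with
  | none => rw [ha] at h; simp at h
  | some u => rfl

/-- Pigeonhole: any point in the domain of `x ^ n` is periodic. -/
theorem exists_period (x : Rook n G) {j : Fin n} (h : (F x n j).isSome) :
    ∃ m, 0 < m ∧ F x m j = some j := by
  have hsome : ∀ a : Fin (n + 1), (F x (a : ℕ) j).isSome :=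
    fun a => F_mono x (Nat.le_of_lt_succ a.isLt) h
  obtain ⟨a, b, hne, heq⟩ :=
    Fintype.exists_ne_map_eq_of_card_lt
      (fun a : Fin (n + 1) => (F x (a : ℕ) j).get (hsome a)) (by simp)
  wlog hab : (a : ℕ) < (b : ℕ) generalizing a b
  · exact this b a hne.symm heq.symm
      (lt_of_le_of_ne (Nat.le_of_not_lt hab) fun e => hne (Fin.ext e.symm))
  have ha : F x (a : ℕ) j = some ((F x (a : ℕ) j).get (hsome a)) :=
    (Option.some_get _).symm
  have hb : F x (b : ℕ) j = some ((F x (a : ℕ) j).get (hsome a)) := by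
    rw [heq]; exact (Option.some_get _).symm
  have hdec : F x ((a : ℕ) + ((b : ℕ) - a)) j = (F x ((b : ℕ) - a) j).bind (F x a) :=
    F_add x _ _ _
  rw [Nat.add_sub_cancel' (Nat.le_of_lt hab), hb] at hdec
  obtain ⟨u, hu1, hu2⟩ := Option.bind_eq_some_iff.mp hdec.symm
  have : u = j := F_inj x hu2 ha
  subst this
  exact ⟨(b : ℕ) - a, Nat.sub_pos_of_lt hab, hu1⟩

theorem F_mul_period (x : Rook n G) {m : ℕ} {j : Fin n} (hm : F x m j = some j)
    (q : ℕ) : F x (q * m) j = some j := by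
  induction q with
  | zero => simp [F_zero]
  | succ q ih =>
      rw [Nat.succ_mul, F_add, hm, Option.bind_some, ih]

end Rook

namespace Rook

variable {n : ℕ} {G : Type*} [Group G]

theorem dom_of_periodic (x : Rook n G) {m : ℕ} {j : Fin n} (hm0 : 0 < m)
    (hm : F x m j = some j) (k : ℕ) : (F x k j).isSome := by
  have h := F_mul_period x hm k
  exact F_mono x (Nat.le_mul_of_pos_right k hm0) (by rw [h]; rfl)

theorem range_of_periodic (x : Rook n G) {m : ℕ} {j : Fin n} (hm0 : 0 < m)
    (hm : F x m j = some j) (k : ℕ) : ∃ u, F x k u = some j := by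
  have h := F_mul_period x hm k
  have hle : k ≤ k * m := Nat.le_mul_of_pos_right k hm0
  rw [show k * m = k + (k * m - k) from (Nat.add_sub_cancel' hle).symm, F_add] at h
  obtain ⟨u, _, hu2⟩ := Option.bind_eq_some_iff.mp h
  exact ⟨u, hu2⟩

theorem periodic_of_range (x : Rook n G) {k : ℕ} (hk : n ≤ k) {u j : Fin n}
    (hu : F x k u = some j) : ∃ m, 0 < m ∧ F x m j = some j := by
  have hdom : (F x n u).isSome := F_mono x hk (by rw [hu]; rfl)
  obtain ⟨m, hm0, hmu⟩ := exists_period x hdom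
  refine ⟨m, hm0, ?_⟩
  have h1 : F x (m + k) u = F x m j := by rw [F_add, hu, Option.bind_some]
  have h2 : F x (m + k) u = some j := by
    rw [Nat.add_comm, F_add, hmu, Option.bind_some, hu]
  rw [← h1, h2]

/-- For `k ≥ n`, the domain and range of `x ^ k` coincide. -/
theorem dom_iff_range (x : Rook n G) {k : ℕ} (hk : n ≤ k) (j : Fin n) :
    (F x k j).isSome ↔ ∃ u, F x k u = some j := by
  constructor
  · intro h
    obtain ⟨m, hm0, hm⟩ := exists_period x (F_mono x hk h)
    exact range_of_periodic x hm0 hm k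
  · intro ⟨u, hu⟩
    obtain ⟨m, hm0, hm⟩ := periodic_of_range x hk hu
    exact dom_of_periodic x hm0 hm k

/-- The shift partial permutation `j ↦ j + 1`. -/
def shift (n : ℕ) (G : Type*) [Group G] : Rook n G where
  col j := if h : (j : ℕ) + 1 < n then some ((1 : G), ⟨(j : ℕ) + 1, h⟩) else none
  inj := by
    intro j k p q hp hq hpq
    split_ifs at hp hq with h1 h2
    · injection hp with hp'; injection hq with hq'
      subst hp'; subst hq'
      dsimp only at hpq
      have h3 : (j : ℕ) + 1 = (k : ℕ) + 1 := congrArg Fin.val hpq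
      exact Fin.ext (by omega)

theorem shift_col (j : Fin n) :
    (shift n G).col j =
      if h : (j : ℕ) + 1 < n then some ((1 : G), ⟨(j : ℕ) + 1, h⟩) else none := rfl

theorem shift_pow (m : ℕ) (j : Fin n) :
    ((shift n G) ^ m).col j =
      if h : (j : ℕ) + m < n then some ((1 : G), ⟨(j : ℕ) + m, h⟩) else none := by
  induction m with
  | zero =>
      rw [pow_zero, one_col, dif_pos (by simp [j.isLt] : (j : ℕ) + 0 < n)]
      exact congrArg some (congrArg (Prod.mk 1) (Fin.ext (by simp)))
  | succ m ih =>
      rw [pow_succ', mul_col, ih]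
      split_ifs with h1 h2 h2
      · rw [Option.bind_some, shift_col]
        dsimp only
        rw [dif_pos (show (j : ℕ) + m + 1 < n by omega)]
        simp only [Option.map_some, mul_one, Option.some.injEq, Prod.mk.injEq,
          Fin.mk.injEq, true_and]
        omega
      · rw [Option.bind_some, shift_col]
        dsimp only
        rw [dif_neg (show ¬ ((j : ℕ) + m + 1 < n) by omega)]
        rfl
      · omega
      · rfl

end Rook


/-- The monoid `Matₙ(G⁰)` of generalized rook matrices over a group with zero
satisfies Reilly's identity `d(x^k) = r(x^k)` (with `d x = x⁻¹ * x`,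
`r x = x * x⁻¹`) if and only if `k ≥ n`. -/
theorem stmt12 (n k : ℕ) (hn : 0 < n) (hk : 0 < k) (G : Type*) [Group G] :
    (∀ x : Rook n G, (x ^ k)⁻¹ * x ^ k = x ^ k * (x ^ k)⁻¹) ↔ n ≤ k := by
  constructor
  · intro h
    by_contra hnk
    have hkn : k < n := Nat.lt_of_not_le hnk
    have heq := congrFun (congrArg Rook.col (h (Rook.shift n G))) ⟨0, hn⟩
    rw [Rook.d_col, Rook.r_col] at heq
    have hcol : ((Rook.shift n G) ^ k).col ⟨0, hn⟩ = some ((1 : G), ⟨k, by omega⟩) := by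
      rw [Rook.shift_pow, dif_pos (by simpa using hkn)]
      exact congrArg some (congrArg (Prod.mk 1) (Fin.ext (by simp)))
    rw [hcol] at heq
    rw [if_neg ?_] at heq
    · simp at heq
    · rintro ⟨⟨u, p⟩, h1, h2⟩
      rw [Rook.shift_pow] at h1
      split_ifs at h1 with h3
      injection h1 with h1'
      rw [← h1'] at h2
      have h4 : (u : ℕ) + k = 0 := congrArg Fin.val h2
      omega
  · intro hnk x
    refine Rook.ext' (funext fun i => ?_)
    rw [Rook.d_col, Rook.r_col]
    rcases hd : (x ^ k).col i with _ | p
    · rw [if_neg, Option.map_none]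
      rintro ⟨⟨u, p⟩, h1, h2⟩
      have hr : Rook.F x k u = some i := by
        rw [Rook.F, h1, Option.map_some, h2]
      have := (Rook.dom_iff_range x hnk i).mpr ⟨u, hr⟩
      rw [Rook.F, hd] at this
      simp at this
    · rw [if_pos, Option.map_some]
      have hdom : (Rook.F x k i).isSome := by rw [Rook.F, hd]; rfl
      obtain ⟨u, hu⟩ := (Rook.dom_iff_range x hnk i).mp hdom
      rw [Rook.F, Option.map_eq_some_iff] at hu
      obtain ⟨q, hq1, hq2⟩ := hu
      exact ⟨(u, q), hq1, hq2⟩
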